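/- arXiv:2504.10970 — 3 statements merged into one kernel-verified Lean document; each statement's English description precedes it below -/
import Mathlib

section
/- For all real numbers a > 0, b ≥ 0 and β ≥ 0, one has (a+βb)²·log((a+βb)²) − a²·log(a²) − 2βab·log(a²) ≤ (8/e)·β²·a^{1/2}·b² + (8/e)·β^{5/2}·b^{5/2} + 2βab + 6β²b². -/
lemma log_le_div_e {t : ℝ} (ht : 0 < t) : Real.log t ≤ t / Real.exp 1 := by
  have h := Real.log_le_sub_one_of_pos (x := t / Real.exp 1) (by positivity)
  rw [Real.log_div ht.ne' (Real.exp_ne_zero 1), Real.log_exp] at h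
  linarith

lemma aux (a c : ℝ) (ha : 0 < a) (hc : 0 ≤ c) :
    (a + c) ^ 2 * Real.log ((a + c) ^ 2) - a ^ 2 * Real.log (a ^ 2)
        - 2 * a * c * Real.log (a ^ 2)
      ≤ (4 / Real.exp 1) * c ^ 2 * Real.sqrt a + (4 / Real.exp 1) * c ^ 2 * Real.sqrt c
        + 2 * a * c + 4 * c ^ 2 := by
  have hac : 0 < a + c := by linarith
  have epos := Real.exp_pos 1
  set L1 := Real.log (a + c) with hL1
  set L2 := Real.log a with hL2
  -- log(a+c) - log a ≤ c/a
  have hlog1 : L1 - L2 ≤ c / a := by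
    have h := Real.log_le_sub_one_of_pos (x := (a + c) / a) (by positivity)
    rw [Real.log_div hac.ne' ha.ne'] at h
    have : (a + c) / a - 1 = c / a := by field_simp; ring
    linarith
  -- log(a+c) ≤ 2 √(a+c)/e
  have hs : Real.sqrt (a + c) ^ 2 = a + c := Real.sq_sqrt hac.le
  have hspos : 0 < Real.sqrt (a + c) := Real.sqrt_pos.2 hac
  have hlog2 : L1 ≤ 2 * Real.sqrt (a + c) / Real.exp 1 := by
    have h := log_le_div_e hspos
    have h2 : L1 = 2 * Real.log (Real.sqrt (a + c)) := by
      rw [hL1, Real.log_sqrt hac.le]; ring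
    rw [h2]
    have : 2 * Real.sqrt (a + c) / Real.exp 1 = 2 * (Real.sqrt (a + c) / Real.exp 1) := by ring
    rw [this]; linarith
  -- √(a+c) ≤ √a + √c
  have hsqrt : Real.sqrt (a + c) ≤ Real.sqrt a + Real.sqrt c := by
    have h1 : a + c ≤ (Real.sqrt a + Real.sqrt c) ^ 2 := by
      nlinarith [Real.sq_sqrt ha.le, Real.sq_sqrt hc, Real.sqrt_nonneg a,
        Real.sqrt_nonneg c]
    calc Real.sqrt (a + c) ≤ Real.sqrt ((Real.sqrt a + Real.sqrt c) ^ 2) :=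
          Real.sqrt_le_sqrt h1
      _ = Real.sqrt a + Real.sqrt c := Real.sqrt_sq (by positivity)
  have hA : 2 * (a ^ 2 + 2 * a * c) * (L1 - L2) ≤ 2 * a * c + 4 * c ^ 2 := by
    have h1 : (a ^ 2 + 2 * a * c) * (L1 - L2) ≤ (a ^ 2 + 2 * a * c) * (c / a) :=
      mul_le_mul_of_nonneg_left hlog1 (by nlinarith)
    have h2 : (a ^ 2 + 2 * a * c) * (c / a) = a * c + 2 * c ^ 2 := by
      field_simp
    linarith
  have hB : 2 * c ^ 2 * L1
      ≤ (4 / Real.exp 1) * c ^ 2 * Real.sqrt a + (4 / Real.exp 1) * c ^ 2 * Real.sqrt c := by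
    have h1 : 2 * c ^ 2 * L1 ≤ 2 * c ^ 2 * (2 * Real.sqrt (a + c) / Real.exp 1) :=
      mul_le_mul_of_nonneg_left hlog2 (by positivity)
    have h2 : 2 * c ^ 2 * (2 * Real.sqrt (a + c) / Real.exp 1)
        ≤ 2 * c ^ 2 * (2 * (Real.sqrt a + Real.sqrt c) / Real.exp 1) := by
      gcongr
    have h3 : 2 * c ^ 2 * (2 * (Real.sqrt a + Real.sqrt c) / Real.exp 1)
        = (4 / Real.exp 1) * c ^ 2 * Real.sqrt a + (4 / Real.exp 1) * c ^ 2 * Real.sqrt c := by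
      field_simp; ring
    linarith
  have hid : (a + c) ^ 2 * Real.log ((a + c) ^ 2) - a ^ 2 * Real.log (a ^ 2)
        - 2 * a * c * Real.log (a ^ 2)
      = 2 * (a ^ 2 + 2 * a * c) * (L1 - L2) + 2 * c ^ 2 * L1 := by
    rw [show Real.log ((a + c) ^ 2) = 2 * L1 by rw [hL1, Real.log_pow]; push_cast; ring,
        show Real.log (a ^ 2) = 2 * L2 by rw [hL2, Real.log_pow]; push_cast; ring]
    ring
  linarith [hid, hA, hB]

theorem stmt_4 (a b β : ℝ) (ha : 0 < a) (hb : 0 ≤ b) (hβ : 0 ≤ β) :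
    (a + β * b) ^ 2 * Real.log ((a + β * b) ^ 2) - a ^ 2 * Real.log (a ^ 2)
        - 2 * β * a * b * Real.log (a ^ 2)
      ≤ (8 / Real.exp 1) * β ^ 2 * a ^ ((1 : ℝ) / 2) * b ^ 2
        + (8 / Real.exp 1) * β ^ ((5 : ℝ) / 2) * b ^ ((5 : ℝ) / 2)
        + 2 * β * a * b + 6 * β ^ 2 * b ^ 2 := by
  have hc : 0 ≤ β * b := mul_nonneg hβ hb
  have h := aux a (β * b) ha hc
  have epos := Real.exp_pos 1
  have hsa : Real.sqrt a = a ^ ((1 : ℝ) / 2) := Real.sqrt_eq_rpow a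
  have hsc : (β * b) ^ 2 * Real.sqrt (β * b) = β ^ ((5 : ℝ) / 2) * b ^ ((5 : ℝ) / 2) := by
    rw [Real.sqrt_eq_rpow, ← Real.mul_rpow hβ hb,
        show ((β * b) ^ 2 : ℝ) = (β * b) ^ (2 : ℝ) from (Real.rpow_two _).symm,
        ← Real.rpow_add' (mul_nonneg hβ hb) (by norm_num),
        show (2 : ℝ) + 1 / 2 = 5 / 2 by norm_num, Real.mul_rpow hβ hb]
  have hea : 0 ≤ a ^ ((1 : ℝ) / 2) := Real.rpow_nonneg ha.le _
  have he52 : 0 ≤ β ^ ((5 : ℝ) / 2) * b ^ ((5 : ℝ) / 2) := by positivity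
  have e1 : 4 / Real.exp 1 * (β * b) ^ 2 * Real.sqrt a
      = 4 / Real.exp 1 * (β ^ 2 * a ^ ((1 : ℝ) / 2) * b ^ 2) := by rw [hsa]; ring
  have e2 : 4 / Real.exp 1 * (β * b) ^ 2 * Real.sqrt (β * b)
      = 4 / Real.exp 1 * (β ^ ((5 : ℝ) / 2) * b ^ ((5 : ℝ) / 2)) := by rw [mul_assoc, hsc]
  have t1 : 0 ≤ 4 / Real.exp 1 * (β ^ 2 * a ^ ((1 : ℝ) / 2) * b ^ 2) := by positivity
  have t2 : 0 ≤ 4 / Real.exp 1 * (β ^ ((5 : ℝ) / 2) * b ^ ((5 : ℝ) / 2)) := by positivity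
  rw [e1, e2] at h
  have q1 : (8 : ℝ) / Real.exp 1 * β ^ 2 * a ^ ((1 : ℝ) / 2) * b ^ 2
      = 4 / Real.exp 1 * (β ^ 2 * a ^ ((1 : ℝ) / 2) * b ^ 2)
        + 4 / Real.exp 1 * (β ^ 2 * a ^ ((1 : ℝ) / 2) * b ^ 2) := by ring
  have q2 : (8 : ℝ) / Real.exp 1 * β ^ ((5 : ℝ) / 2) * b ^ ((5 : ℝ) / 2)
      = 4 / Real.exp 1 * (β ^ ((5 : ℝ) / 2) * b ^ ((5 : ℝ) / 2))
        + 4 / Real.exp 1 * (β ^ ((5 : ℝ) / 2) * b ^ ((5 : ℝ) / 2)) := by ring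
  nlinarith [h, t1, t2, sq_nonneg (β * b), q1, q2]
end

section
/- Let δ be a real number with 0 < δ ≤ 1/2. Then for all real numbers a > 0, b ≥ 0 and β ≥ 0, one has (a+βb)²·log((a+βb)²) − a²·log(a²) − 2βab·log(a²) ≤ (2/(eδ))·β²·a^{2δ}·b² + (2/(eδ))·β^{2+2δ}·b^{2+2δ} + 2βab + 6β²b². -/
theorem log_le_rpow_div' (x p : ℝ) (hx : 0 < x) (hp : 0 < p) :
    Real.log x ≤ x ^ p / (Real.exp 1 * p) := by
  have hxp : 0 < x ^ p := Real.rpow_pos_of_pos hx p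
  have he : (0:ℝ) < Real.exp 1 := Real.exp_pos 1
  have h1 : Real.log (x ^ p) ≤ x ^ p / Real.exp 1 := by
    have h := Real.add_one_le_exp (Real.log (x ^ p) - 1)
    rw [Real.exp_sub, Real.exp_log hxp] at h
    linarith
  rw [Real.log_rpow hx] at h1
  have h2 : p * Real.log x * Real.exp 1 ≤ x ^ p := (le_div_iff₀ he).mp h1
  rw [le_div_iff₀ (by positivity : (0:ℝ) < Real.exp 1 * p)]
  calc Real.log x * (Real.exp 1 * p) = p * Real.log x * Real.exp 1 := by ring
    _ ≤ x ^ p := h2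

theorem stmt_5 (δ : ℝ) (hδ0 : 0 < δ) (hδ1 : δ ≤ 1 / 2)
    (a b β : ℝ) (ha : 0 < a) (hb : 0 ≤ b) (hβ : 0 ≤ β) :
    (a + β * b) ^ 2 * Real.log ((a + β * b) ^ 2) - a ^ 2 * Real.log (a ^ 2)
        - 2 * β * a * b * Real.log (a ^ 2)
      ≤ (2 / (Real.exp 1 * δ)) * β ^ 2 * a ^ (2 * δ) * b ^ 2
        + (2 / (Real.exp 1 * δ)) * β ^ (2 + 2 * δ) * b ^ (2 + 2 * δ)
        + 2 * β * a * b + 6 * β ^ 2 * b ^ 2 := by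
  have he : (0:ℝ) < Real.exp 1 := Real.exp_pos 1
  set c : ℝ := 1 / (Real.exp 1 * δ) with hc
  have hcpos : 0 < c := by positivity
  have hrw : 2 / (Real.exp 1 * δ) = 2 * c := by rw [hc]; ring
  rw [hrw]
  have hs : 0 ≤ β * b := mul_nonneg hβ hb
  have has : 0 < a + β * b := by linarith
  have hlog1 : Real.log ((a + β * b) ^ 2) = 2 * Real.log (a + β * b) := by
    rw [Real.log_pow]; norm_num
  have hlog0 : Real.log (a ^ 2) = 2 * Real.log a := by
    rw [Real.log_pow]; norm_num
  rw [hlog1, hlog0]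
  have hdiv : Real.log (a + β * b) - Real.log a ≤ (β * b) / a := by
    rw [← Real.log_div (ne_of_gt has) (ne_of_gt ha)]
    have h := Real.log_le_sub_one_of_pos (show 0 < (a + β * b) / a by positivity)
    have heq : (a + β * b) / a - 1 = (β * b) / a := by field_simp; ring
    linarith
  have hA : (0:ℝ) ≤ a ^ (2 * δ) := le_of_lt (Real.rpow_pos_of_pos ha _)
  have hmul : (β * b) ^ (2 + 2 * δ) = β ^ (2 + 2 * δ) * b ^ (2 + 2 * δ) :=
    Real.mul_rpow hβ hb
  have hS : (0:ℝ) ≤ (β * b) ^ (2 + 2 * δ) := Real.rpow_nonneg hs _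
  rcases le_or_gt (β * b) a with hcase | hcase
  · -- case β*b ≤ a
    have hloga : 2 * Real.log a ≤ c * a ^ (2 * δ) := by
      have h := log_le_rpow_div' a (2 * δ) ha (by linarith)
      have heq : ∀ X : ℝ, X / (Real.exp 1 * (2 * δ)) = c * X / 2 := by
        intro X
        rw [hc, one_div, inv_mul_eq_div, div_div,
          show Real.exp 1 * (2 * δ) = Real.exp 1 * δ * 2 from by ring]
      rw [heq] at h; linarith
    have h1 : 2 * (a + β * b) ^ 2 * (Real.log (a + β * b) - Real.log a)
        ≤ 2 * a * (β * b) + 6 * (β * b) ^ 2 := by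
      have h2 := mul_le_mul_of_nonneg_left hdiv
        (show (0:ℝ) ≤ 2 * (a + β * b) ^ 2 by positivity)
      have h3 : 2 * (a + β * b) ^ 2 * ((β * b) / a) ≤ 2 * a * (β * b) + 6 * (β * b) ^ 2 := by
        rw [show 2 * (a + β * b) ^ 2 * ((β * b) / a) = 2 * (a + β * b) ^ 2 * (β * b) / a by ring,
          div_le_iff₀ ha]
        nlinarith [mul_nonneg (mul_nonneg hs hs) (sub_nonneg.mpr hcase)]
      linarith
    have h4 : 2 * (β * b) ^ 2 * Real.log a ≤ c * a ^ (2 * δ) * (β * b) ^ 2 := by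
      calc 2 * (β * b) ^ 2 * Real.log a = (β * b) ^ 2 * (2 * Real.log a) := by ring
        _ ≤ (β * b) ^ 2 * (c * a ^ (2 * δ)) :=
            mul_le_mul_of_nonneg_left hloga (sq_nonneg _)
        _ = c * a ^ (2 * δ) * (β * b) ^ 2 := by ring
    have hmul' : c * (β * b) ^ (2 + 2 * δ) = c * (β ^ (2 + 2 * δ) * b ^ (2 + 2 * δ)) := by
      rw [hmul]
    linarith [h1, h4, hmul', mul_nonneg hcpos.le hS,
      mul_nonneg (mul_nonneg hcpos.le hA) (sq_nonneg (β * b))]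
  · -- case a < β*b
    have hbpos : 0 < β * b := lt_trans ha hcase
    have h1 : (2 * a ^ 2 + 4 * a * (β * b)) * (Real.log (a + β * b) - Real.log a)
        ≤ 2 * a * (β * b) + 4 * (β * b) ^ 2 := by
      have h2 := mul_le_mul_of_nonneg_left hdiv
        (show (0:ℝ) ≤ 2 * a ^ 2 + 4 * a * (β * b) by positivity)
      have h3 : (2 * a ^ 2 + 4 * a * (β * b)) * ((β * b) / a)
          = 2 * a * (β * b) + 4 * (β * b) ^ 2 := by field_simp
      linarith
    have hlogs : Real.log (a + β * b) ≤ Real.log 2 + Real.log (β * b) := by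
      have h4 : Real.log (a + β * b) ≤ Real.log (2 * (β * b)) := by
        apply Real.log_le_log has; linarith
      rwa [Real.log_mul two_ne_zero (ne_of_gt hbpos)] at h4
    have hlog2 : Real.log 2 ≤ 1 := by
      have := Real.log_le_sub_one_of_pos (show (0:ℝ) < 2 by norm_num); linarith
    have hlogsb : 2 * Real.log (β * b) ≤ c * (β * b) ^ (2 * δ) := by
      have h := log_le_rpow_div' (β * b) (2 * δ) hbpos (by linarith)
      have heq : ∀ X : ℝ, X / (Real.exp 1 * (2 * δ)) = c * X / 2 := by
        intro X
        rw [hc, one_div, inv_mul_eq_div, div_div,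
          show Real.exp 1 * (2 * δ) = Real.exp 1 * δ * 2 from by ring]
      rw [heq] at h; linarith
    have hsplit : (β * b) ^ (2 + 2 * δ) = (β * b) ^ 2 * (β * b) ^ (2 * δ) := by
      rw [Real.rpow_add hbpos, show ((2:ℝ) = ((2:ℕ):ℝ)) by norm_num, Real.rpow_natCast]
    have h5 : 2 * (β * b) ^ 2 * Real.log (a + β * b)
        ≤ 2 * (β * b) ^ 2 + c * (β * b) ^ (2 + 2 * δ) := by
      have h6 : 2 * (β * b) ^ 2 * Real.log (a + β * b)
          ≤ 2 * (β * b) ^ 2 * (Real.log 2 + Real.log (β * b)) :=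
        mul_le_mul_of_nonneg_left hlogs (by positivity)
      have h7 : (β * b) ^ 2 * (2 * Real.log (β * b)) ≤ (β * b) ^ 2 * (c * (β * b) ^ (2 * δ)) :=
        mul_le_mul_of_nonneg_left hlogsb (sq_nonneg _)
      have h8 : 2 * (β * b) ^ 2 * Real.log 2 ≤ 2 * (β * b) ^ 2 := by
        have h9 := mul_le_mul_of_nonneg_left hlog2 (show (0:ℝ) ≤ 2 * (β * b) ^ 2 by positivity)
        linarith
      have hsplit' : c * (β * b) ^ (2 + 2 * δ) = c * ((β * b) ^ 2 * (β * b) ^ (2 * δ)) := by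
        rw [hsplit]
      linarith [h6, h7, h8, hsplit']
    have hmul' : c * (β * b) ^ (2 + 2 * δ) = c * (β ^ (2 + 2 * δ) * b ^ (2 + 2 * δ)) := by
      rw [hmul]
    linarith [h1, h5, hmul', mul_nonneg hcpos.le hS,
      mul_nonneg (mul_nonneg hcpos.le hA) (sq_nonneg (β * b))]
end

section
/- Let p be a real number with p ≥ 3. Then for all real numbers a ≥ 0 and b ≥ 0, one has (a+b)^p ≥ a^p + b^p + p·a^{p−1}·b + p·a·b^{p−1}. -/
open Real

lemma lemS (q : ℝ) (hq : 1 ≤ q) (a b : ℝ) (ha : 0 ≤ a) (hb : 0 ≤ b) :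
    a ^ q + b ^ q ≤ (a + b) ^ q := by
  have h := NNReal.add_rpow_le_rpow_add a.toNNReal b.toNNReal hq
  have h2 := NNReal.coe_le_coe.mpr h
  rw [NNReal.coe_add, NNReal.coe_rpow, NNReal.coe_rpow, NNReal.coe_rpow, NNReal.coe_add,
    Real.coe_toNNReal a ha, Real.coe_toNNReal b hb] at h2
  exact h2

lemma lemC (q : ℝ) (hq : 2 ≤ q) (a b : ℝ) (ha : 0 ≤ a) (hb : 0 ≤ b) :
    a ^ q + b ^ q + q * a ^ (q - 1) * b ≤ (a + b) ^ q := by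
  have h1 : (1:ℝ) ≤ q := by linarith
  set f : ℝ → ℝ := fun x => (a + x) ^ q - x ^ q - q * a ^ (q - 1) * x with hfdef
  have hf : ∀ x : ℝ, HasDerivAt f (q * (a + x) ^ (q - 1) - q * x ^ (q - 1) - q * a ^ (q - 1)) x := by
    intro x
    have hA : HasDerivAt (fun x : ℝ => (a + x) ^ q) (q * (a + x) ^ (q - 1)) x := by
      have := (Real.hasDerivAt_rpow_const (x := a + x) (p := q) (Or.inr h1)).comp x
        ((hasDerivAt_id x).const_add a)
      simpa [Function.comp_def] using this
    have hB : HasDerivAt (fun x : ℝ => x ^ q) (q * x ^ (q - 1)) x :=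
      Real.hasDerivAt_rpow_const (Or.inr h1)
    have hC : HasDerivAt (fun x : ℝ => q * a ^ (q - 1) * x) (q * a ^ (q - 1)) x := by
      simpa using (hasDerivAt_id x).const_mul (q * a ^ (q - 1))
    exact (hA.sub hB).sub hC
  have hmono : MonotoneOn f (Set.Ici (0:ℝ)) := by
    apply monotoneOn_of_deriv_nonneg (convex_Ici 0)
    · exact fun x _ => (hf x).differentiableAt.continuousAt.continuousWithinAt
    · exact fun x _ => (hf x).differentiableAt.differentiableWithinAt
    · intro x hx
      rw [(hf x).deriv]
      rw [interior_Ici] at hx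
      have hx0 : (0:ℝ) ≤ x := le_of_lt hx
      have hs := lemS (q - 1) (by linarith) a x ha hx0
      nlinarith [hs, hq]
  have h0 : f 0 ≤ f b := hmono (by simp) (by simpa using hb) hb
  have hz : f 0 = a ^ q := by
    simp [hfdef, Real.zero_rpow (by positivity : q ≠ 0)]
  rw [hz] at h0
  simp only [hfdef] at h0
  linarith

theorem stmt_6 (p : ℝ) (hp : 3 ≤ p) (a b : ℝ) (ha : 0 ≤ a) (hb : 0 ≤ b) :
    (a + b) ^ p ≥ a ^ p + b ^ p + p * a ^ (p - 1) * b + p * a * b ^ (p - 1) := by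
  rcases eq_or_lt_of_le ha with rfl | ha'
  · simp [Real.zero_rpow (by positivity : p ≠ 0),
      Real.zero_rpow (show p - 1 ≠ 0 by intro h; nlinarith)]
  rcases eq_or_lt_of_le hb with rfl | hb'
  · simp [Real.zero_rpow (by positivity : p ≠ 0),
      Real.zero_rpow (show p - 1 ≠ 0 by intro h; nlinarith)]
  have hab : 0 < a + b := by linarith
  have hq : (2:ℝ) ≤ p - 1 := by linarith
  have h1' := mul_le_mul_of_nonneg_left (lemC (p - 1) hq a b ha hb) ha
  have h2' := mul_le_mul_of_nonneg_left (lemC (p - 1) hq b a hb ha) hb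
  have ea : a ^ p = a * a ^ (p - 1) := by
    rw [show p = 1 + (p - 1) by ring, Real.rpow_add ha', Real.rpow_one]; ring_nf
  have eb : b ^ p = b * b ^ (p - 1) := by
    rw [show p = 1 + (p - 1) by ring, Real.rpow_add hb', Real.rpow_one]; ring_nf
  have eab : (a + b) ^ p = a * (a + b) ^ (p - 1) + b * (a + b) ^ (p - 1) := by
    rw [show p = 1 + (p - 1) by ring, Real.rpow_add hab, Real.rpow_one]; ring_nf
  have ea2 : a ^ (p - 1) = a * a ^ (p - 1 - 1) := by
    rw [show p - 1 = 1 + (p - 1 - 1) by ring, Real.rpow_add ha', Real.rpow_one]; ring_nf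
  have eb2 : b ^ (p - 1) = b * b ^ (p - 1 - 1) := by
    rw [show p - 1 = 1 + (p - 1 - 1) by ring, Real.rpow_add hb', Real.rpow_one]; ring_nf
  rw [ge_iff_le, eab, ea, eb]
  have hba : (b + a) ^ (p - 1) = (a + b) ^ (p - 1) := by rw [add_comm]
  rw [hba] at h2'
  have H1 : a * a ^ (p - 1) + a * b ^ (p - 1) + (p - 1) * a ^ (p - 1) * b
      ≤ a * (a + b) ^ (p - 1) := by
    calc a * a ^ (p - 1) + a * b ^ (p - 1) + (p - 1) * a ^ (p - 1) * b
        = a * (a ^ (p - 1) + b ^ (p - 1) + (p - 1) * a ^ (p - 1 - 1) * b) := by rw [ea2]; ring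
      _ ≤ _ := h1'
  have H2 : b * b ^ (p - 1) + b * a ^ (p - 1) + (p - 1) * b ^ (p - 1) * a
      ≤ b * (a + b) ^ (p - 1) := by
    calc b * b ^ (p - 1) + b * a ^ (p - 1) + (p - 1) * b ^ (p - 1) * a
        = b * (b ^ (p - 1) + a ^ (p - 1) + (p - 1) * b ^ (p - 1 - 1) * a) := by rw [eb2]; ring
      _ ≤ _ := h2'
  linarith [H1, H2]
end
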